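/- Let G be a δ-hyperbolic group with boundary ∂G. For every l > 8δ there exists a finite open cover (U_i)_{i=1}^n of ∂G such that for every i ≤ n and all x, x' ∈ U_i, x' ∈ 𝒩_x^l, i.e., whenever Q(m) = x and Q(m') = x' for DSGs m, m', we have d_S(c_m^{1}(i), c_{m'}^{1}(i)) ≤ 2δ for all i ≤ l. -/

import Mathlib

/-- The word metric on a group `G` with respect to a generating set `S`. -/
noncomputable def wordDist {G : Type*} [Group G] (S : Set G) (g h : G) : ℕ :=
  sInf {n | ∃ l : List G, (∀ x ∈ l, x ∈ S) ∧ l.length = n ∧ g = h * l.prod}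

/-- `S` is a finite symmetric generating set of `G`. -/
def IsFinSymmGenSet {G : Type*} [Group G] (S : Set G) : Prop :=
  S.Finite ∧ (∀ s ∈ S, s⁻¹ ∈ S) ∧ Subgroup.closure S = ⊤

/-- A discrete geodesic segment from `g` to `h` with respect to the integer-valued
metric `d`, parametrized on `[0, d g h]`. -/
def IsGeodesicSeg {G : Type*} (d : G → G → ℕ) (c : ℕ → G) (g h : G) : Prop :=
  c 0 = g ∧ c (d g h) = h ∧
    ∀ i j : ℕ, i ≤ d g h → j ≤ d g h → d (c i) (c j) = Nat.dist i j

/-- A discrete geodesic ray: an isometric embedding `c : ℕ → G`. -/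
def IsGeodesicRay {G : Type*} (d : G → G → ℕ) (c : ℕ → G) : Prop :=
  ∀ i j : ℕ, d (c i) (c j) = Nat.dist i j

/-- Two rays are asymptotic if their images are at finite Hausdorff distance. -/
def Asymptotic {G : Type*} (d : G → G → ℕ) (c c' : ℕ → G) : Prop :=
  ∃ K : ℕ, (∀ t : ℕ, ∃ s : ℕ, d (c t) (c' s) ≤ K) ∧ (∀ s : ℕ, ∃ t : ℕ, d (c' s) (c t) ≤ K)

/-- Rips δ-hyperbolicity of the integer-valued metric `d`: each side of any discrete
geodesic triangle is contained in the δ-neighborhood of the union of the other two sides. -/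
def DiscHyperbolic {G : Type*} (d : G → G → ℕ) (δ : ℕ) : Prop :=
  ∀ x y z : G, ∀ cxy cyz czx : ℕ → G,
    IsGeodesicSeg d cxy x y → IsGeodesicSeg d cyz y z → IsGeodesicSeg d czx z x →
    ∀ i ≤ d x y, ∃ p ∈ cyz '' Set.Iic (d y z) ∪ czx '' Set.Iic (d z x), d (cxy i) p ≤ δ

/-- The ray determined by a map `m : G → G` starting at `g`:
each step multiplies by the value of `m` at the current position. -/
def dsgRay {G : Type*} [Group G] (m : G → G) (g : G) : ℕ → G
  | 0 => g
  | n + 1 => dsgRay m g n * m (dsgRay m g n)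

/-- A directed system of geodesics (DSG): a map `m : G → S` all of whose rays are
geodesic rays, any two of which are asymptotic. -/
def IsDSG {G : Type*} [Group G] (d : G → G → ℕ) (S : Set G) (m : G → G) : Prop :=
  (∀ g : G, m g ∈ S) ∧ (∀ g : G, IsGeodesicRay d (dsgRay m g)) ∧
    ∀ g h : G, Asymptotic d (dsgRay m g) (dsgRay m h)

/-- The space of DSGs on `G`. -/
def DSGs {G : Type*} [Group G] (d : G → G → ℕ) (S : Set G) := {m : G → G // IsDSG d S m}

/-- The space of geodesic rays in `G`. -/
def GeodesicRays {G : Type*} (d : G → G → ℕ) := {c : ℕ → G // IsGeodesicRay d c}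

/-- The Gromov boundary of `G`, as the quotient of the space of geodesic rays by the
relation of being asymptotic (finite Hausdorff distance). -/
def GromovBoundary {G : Type*} (d : G → G → ℕ) :=
  Quot (fun c c' : GeodesicRays d => Asymptotic d c.1 c'.1)

/-- The topology on geodesic rays: uniform convergence on bounded sets, which for the
discrete group `G` is the product (pointwise convergence) topology. -/
def raysTop {G : Type*} (d : G → G → ℕ) : TopologicalSpace (GeodesicRays d) :=
  TopologicalSpace.induced (fun c => (c.1 : ℕ → G))
    (@Pi.topologicalSpace ℕ (fun _ => G) (fun _ => ⊥))

/-- The quotient topology on the Gromov boundary. -/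
def boundaryTop {G : Type*} (d : G → G → ℕ) : TopologicalSpace (GromovBoundary d) :=
  (raysTop d).coinduced (Quot.mk _)

/-- The canonical surjection `Q : 𝒟 → ∂G` sending a DSG to the class of its ray at `1`. -/
def Qmap {G : Type*} [Group G] (d : G → G → ℕ) (S : Set G) (m : DSGs d S) :
    GromovBoundary d :=
  Quot.mk _ ⟨dsgRay m.1 1, m.2.2.1 1⟩

/-- The topology `τ` on the space of DSGs, generated by the neighborhoods `𝒩_m^{l,D}`. -/
def dsgTop {G : Type*} [Group G] (d : G → G → ℕ) (S : Set G) (δ : ℕ) :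
    TopologicalSpace (DSGs d S) :=
  TopologicalSpace.generateFrom
    {U | ∃ (m : DSGs d S) (l D : ℕ), 8 * δ < l ∧ 2 * δ ≤ D ∧
      U = {m' : DSGs d S | ∀ i ≤ l, d (dsgRay m.1 1 i) (dsgRay m'.1 1 i) ≤ D}}

/-- The word metric is left-invariant. -/
theorem wordDist_mul_left {G : Type*} [Group G] (S : Set G) (a g h : G) :
    wordDist S (a * g) (a * h) = wordDist S g h := by
  unfold wordDist
  congr 1
  ext n
  constructor
  · rintro ⟨l, h1, h2, h3⟩
    exact ⟨l, h1, h2, by rw [mul_assoc] at h3; exact mul_left_cancel h3⟩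
  · rintro ⟨l, h1, h2, h3⟩
    exact ⟨l, h1, h2, by rw [mul_assoc, ← h3]⟩

/-- The canonical action of `G` on its Gromov boundary, induced by left translation
of geodesic rays. -/
def boundaryAct {G : Type*} [Group G] (S : Set G) (g : G) :
    GromovBoundary (wordDist S) → GromovBoundary (wordDist S) :=
  Quot.map
    (fun c => ⟨fun t => g * c.1 t, fun i j => by
      rw [wordDist_mul_left]; exact c.2 i j⟩)
    (by
      rintro c c' ⟨K, h1, h2⟩
      refine ⟨K, fun t => ?_, fun s => ?_⟩
      · obtain ⟨s, hs⟩ := h1 t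
        exact ⟨s, by simpa [wordDist_mul_left] using hs⟩
      · obtain ⟨t, ht⟩ := h2 s
        exact ⟨t, by simpa [wordDist_mul_left] using ht⟩)

section WordAux
variable {G : Type*} [Group G] {S : Set G}

lemma wd_set_nonempty (hS : IsFinSymmGenSet S) (g h : G) :
    {n | ∃ l : List G, (∀ x ∈ l, x ∈ S) ∧ l.length = n ∧ g = h * l.prod}.Nonempty := by
  have hmem : h⁻¹ * g ∈ Subgroup.closure S := by rw [hS.2.2]; trivial
  have hmem2 : h⁻¹ * g ∈ (Subgroup.closure S).toSubmonoid := hmem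
  rw [Subgroup.closure_toSubmonoid] at hmem2
  have hsub : S ∪ S⁻¹ ⊆ S := by
    intro x hx
    rcases hx with hx | hx
    · exact hx
    · have := hS.2.1 x⁻¹ hx; simpa using this
  have hmem3 : h⁻¹ * g ∈ Submonoid.closure S :=
    (Submonoid.closure_mono hsub) hmem2
  obtain ⟨l, hl, hprod⟩ := Submonoid.exists_list_of_mem_closure hmem3
  exact ⟨l.length, l, hl, rfl, by rw [hprod]; group⟩

lemma wordDist_exists_list (hS : IsFinSymmGenSet S) (g h : G) :
    ∃ l : List G, (∀ x ∈ l, x ∈ S) ∧ l.length = wordDist S g h ∧ g = h * l.prod :=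
  Nat.sInf_mem (wd_set_nonempty hS g h)

lemma wordDist_le (g h : G) (l : List G) (hl : ∀ x ∈ l, x ∈ S) (hprod : g = h * l.prod) :
    wordDist S g h ≤ l.length :=
  Nat.sInf_le ⟨l, hl, rfl, hprod⟩

lemma wordDist_self (g : G) : wordDist S g g = 0 :=
  Nat.le_zero.mp (wordDist_le g g [] (by simp) (by simp))

lemma wordDist_symm (hS : IsFinSymmGenSet S) (g h : G) :
    wordDist S g h = wordDist S h g := by
  have key : ∀ a b : G, wordDist S a b ≤ wordDist S b a := by
    intro a b
    obtain ⟨l, hl, hlen, hprod⟩ := wordDist_exists_list hS b a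
    refine le_trans (wordDist_le a b ((l.map (·⁻¹)).reverse) ?_ ?_) (by simp [hlen])
    · intro x hx
      simp only [List.mem_reverse, List.mem_map] at hx
      obtain ⟨y, hy, rfl⟩ := hx
      exact hS.2.1 y (hl y hy)
    · rw [List.prod_reverse_noncomm]
      simp only [List.map_map]
      have : (l.map fun x => x⁻¹⁻¹).prod = l.prod := by
        congr 1
        simp [Function.comp]
      rw [show ((fun x => x⁻¹) ∘ fun x => x⁻¹) = (id : G → G) by funext x; simp]
      rw [List.map_id]
      rw [hprod]; group
  exact le_antisymm (key g h) (key h g)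

lemma wordDist_triangle (hS : IsFinSymmGenSet S) (g h k : G) :
    wordDist S g k ≤ wordDist S g h + wordDist S h k := by
  obtain ⟨l₁, hl₁, hlen₁, hprod₁⟩ := wordDist_exists_list hS g h
  obtain ⟨l₂, hl₂, hlen₂, hprod₂⟩ := wordDist_exists_list hS h k
  refine le_trans (wordDist_le g k (l₂ ++ l₁) ?_ ?_) ?_
  · intro x hx; rcases List.mem_append.mp hx with hx | hx
    · exact hl₂ x hx
    · exact hl₁ x hx
  · rw [List.prod_append, ← mul_assoc, ← hprod₂, ← hprod₁]
  · simp [hlen₁, hlen₂]; omega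

lemma wordDist_nat_dist (hS : IsFinSymmGenSet S) (a x y : G) :
    Nat.dist (wordDist S a x) (wordDist S a y) ≤ wordDist S x y := by
  have h1 := wordDist_triangle hS a x y
  have h2 := wordDist_triangle hS a y x
  rw [wordDist_symm hS y x] at h2
  simp [Nat.dist]; omega

/-- Existence of geodesic segments. -/
lemma exists_geodesicSeg (hS : IsFinSymmGenSet S) (g h : G) :
    ∃ c : ℕ → G, IsGeodesicSeg (wordDist S) c g h := by
  obtain ⟨l, hl, hlen, hprod⟩ := wordDist_exists_list hS h g
  set n := wordDist S g h with hn
  have hlen' : l.length = n := by rw [hlen, wordDist_symm hS h g]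
  refine ⟨fun i => g * (l.take i).prod, ?_, ?_, ?_⟩
  · simp
  · show g * (l.take n).prod = h
    rw [← hlen', List.take_length]
    exact hprod.symm
  · have upper : ∀ i j, i ≤ j → j ≤ n →
        wordDist S (g * (l.take j).prod) (g * (l.take i).prod) ≤ j - i := by
      intro i j hij hj
      have : l.take j = l.take i ++ (l.drop i).take (j - i) := by
        rw [← List.take_add]
        congr 1
        omega
      refine le_trans (wordDist_le _ _ ((l.drop i).take (j - i)) ?_ ?_) ?_
      · intro x hx
        exact hl x (List.mem_of_mem_drop (List.mem_of_mem_take hx))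
      · rw [this, List.prod_append, mul_assoc]
      · rw [List.length_take, List.length_drop, hlen']
        omega
    have upper' : ∀ i j, i ≤ j → j ≤ n →
        wordDist S (g * (l.take i).prod) (g * (l.take j).prod) ≤ j - i := by
      intro i j hij hj
      rw [wordDist_symm hS]
      exact upper i j hij hj
    have lower : ∀ i j, i ≤ j → j ≤ n →
        j - i ≤ wordDist S (g * (l.take i).prod) (g * (l.take j).prod) := by
      intro i j hij hj
      have h1 : wordDist S g (g * (l.take i).prod) ≤ i := by
        rw [wordDist_symm hS]
        have := upper 0 i (by omega) (by omega)
        simpa using this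
      have h2 : wordDist S (g * (l.take j).prod) h ≤ n - j := by
        have := upper j n hj (le_refl n)
        rw [← hlen'] at this
        rw [List.take_length] at this
        rw [hlen'] at this
        rw [← hprod] at this
        rw [wordDist_symm hS]
        exact this
      have htri : n ≤ wordDist S g (g * (l.take i).prod)
          + wordDist S (g * (l.take i).prod) (g * (l.take j).prod)
          + wordDist S (g * (l.take j).prod) h := by
        calc n = wordDist S g h := hn
        _ ≤ wordDist S g (g * (l.take i).prod) + wordDist S (g * (l.take i).prod) h :=
            wordDist_triangle hS _ _ _
        _ ≤ wordDist S g (g * (l.take i).prod)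
            + (wordDist S (g * (l.take i).prod) (g * (l.take j).prod)
               + wordDist S (g * (l.take j).prod) h) := by
            exact Nat.add_le_add_left (wordDist_triangle hS _ _ _) _
        _ = _ := by ring
      omega
    intro i j hi hj
    rcases le_total i j with hij | hij
    · have := le_antisymm (upper' i j hij hj) (lower i j hij hj)
      rw [this, Nat.dist]; omega
    · have := le_antisymm (upper' j i hij hi) (lower j i hij hi)
      rw [wordDist_symm hS, this, Nat.dist]; omega

/-- Balls in the word metric are finite. -/
lemma ball_finite (hS : IsFinSymmGenSet S) (R : ℕ) :
    {g : G | wordDist S 1 g ≤ R}.Finite := by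
  have hlists : ∀ R : ℕ, {l : List G | (∀ x ∈ l, x ∈ S) ∧ l.length ≤ R}.Finite := by
    intro R
    induction R with
    | zero =>
      apply Set.Finite.subset (Set.finite_singleton ([] : List G))
      rintro l ⟨-, hlen⟩
      simp at hlen ⊢
      exact hlen
    | succ R ih =>
      have : {l : List G | (∀ x ∈ l, x ∈ S) ∧ l.length ≤ R + 1} ⊆
          {[]} ∪ Set.image2 List.cons S {l : List G | (∀ x ∈ l, x ∈ S) ∧ l.length ≤ R} := by
        rintro l ⟨hmem, hlen⟩
        cases l with
        | nil => left; rfl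
        | cons a t =>
          right
          refine ⟨a, hmem a (by simp), t, ⟨fun x hx => hmem x (by simp [hx]), ?_⟩, rfl⟩
          simpa using hlen
      exact Set.Finite.subset (Set.Finite.union (Set.finite_singleton _)
        (Set.Finite.image2 _ hS.1 ih)) this
  have : {g : G | wordDist S 1 g ≤ R} ⊆
      (fun l : List G => l.prod⁻¹) '' {l : List G | (∀ x ∈ l, x ∈ S) ∧ l.length ≤ R} := by
    intro g hg
    obtain ⟨l, hl, hlen, hprod⟩ := wordDist_exists_list hS 1 g
    refine ⟨l, ⟨hl, by rw [hlen]; exact hg⟩, ?_⟩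
    show l.prod⁻¹ = g
    exact (eq_inv_of_mul_eq_one_left hprod.symm).symm
  exact Set.Finite.subset (Set.Finite.image _ (hlists R)) this

end WordAux


section GeomAux
variable {G : Type*} [Group G] {S : Set G} {δ : ℕ}

/-- Core comparison lemma: two geodesics with a common start point whose far endpoints
are `K`-close fellow-travel within `2δ` away from the far end. -/
lemma comp_lemma (hS : IsFinSymmGenSet S) (hhyp : DiscHyperbolic (wordDist S) δ)
    (σ τ : ℕ → G) (n s K : ℕ)
    (h0 : σ 0 = τ 0)
    (hσ : ∀ i j, i ≤ n → j ≤ n → wordDist S (σ i) (σ j) = Nat.dist i j)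
    (hτ : ∀ i j, i ≤ s → j ≤ s → wordDist S (τ i) (τ j) = Nat.dist i j)
    (hK : wordDist S (σ n) (τ s) ≤ K) :
    ∀ i, i + K + δ + 1 ≤ n → wordDist S (σ i) (τ i) ≤ 2 * δ := by
  intro i hi
  have hds : wordDist S (σ 0) (σ n) = n := by
    have := hσ 0 n (by omega) (le_refl n); simpa [Nat.dist] using this
  have hts : wordDist S (σ 0) (τ s) = s := by
    rw [h0]; have := hτ 0 s (by omega) (le_refl s); simpa [Nat.dist] using this
  have hn_le : n ≤ s + K := by
    have htri := wordDist_triangle hS (σ 0) (τ s) (σ n)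
    rw [hds] at htri
    have hsym : wordDist S (τ s) (σ n) = wordDist S (σ n) (τ s) := wordDist_symm hS _ _
    omega
  have hi_s : i + δ + 1 ≤ s := by omega
  obtain ⟨b, hb⟩ := exists_geodesicSeg hS (σ n) (τ s)
  have hseg_σ : IsGeodesicSeg (wordDist S) σ (σ 0) (σ n) := by
    refine ⟨rfl, by rw [hds], fun i j hi hj => hσ i j (by omega) (by omega)⟩
  have hdρ : wordDist S (τ s) (σ 0) = s := by rw [wordDist_symm hS, hts]
  have hseg_ρ : IsGeodesicSeg (wordDist S) (fun k => τ (s - k)) (τ s) (σ 0) := by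
    refine ⟨by simp, ?_, ?_⟩
    · rw [hdρ]; simp [← h0]
    · intro a c ha hc
      rw [hdρ] at ha hc
      rw [hτ (s - a) (s - c) (by omega) (by omega)]
      simp [Nat.dist]; omega
  obtain ⟨p, hp, hdp⟩ := hhyp (σ 0) (σ n) (τ s) σ b (fun k => τ (s - k))
    hseg_σ hb hseg_ρ i (by rw [hds]; omega)
  simp only [Set.mem_union, Set.mem_image, Set.mem_Iic] at hp
  rcases hp with ⟨k, hk, rfl⟩ | ⟨k, hk, rfl⟩
  · -- point on the bridge: contradiction
    exfalso
    have hbk : wordDist S (σ n) (b k) = k := by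
      have := hb.2.2 0 k (by omega) hk
      rw [hb.1] at this
      simpa [Nat.dist] using this
    have h1 : wordDist S (σ 0) (σ i) = i := by
      have := hσ 0 i (by omega) (by omega); simpa [Nat.dist] using this
    have h2 := wordDist_triangle hS (σ 0) (σ i) (σ n)
    have h3 := wordDist_triangle hS (σ i) (b k) (σ n)
    have h4 : wordDist S (b k) (σ n) = k := by rw [wordDist_symm hS]; exact hbk
    have hk' : k ≤ K := le_trans hk hK
    omega
  · -- point on the opposite side
    set t := s - k with htdef
    have ht : t ≤ s := by omega
    have hdist_ti : Nat.dist t i ≤ δ := by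
      have e1 : wordDist S (σ 0) (τ t) = t := by
        rw [h0]; have := hτ 0 t (by omega) ht; simpa [Nat.dist] using this
      have e2 : wordDist S (σ 0) (σ i) = i := by
        have := hσ 0 i (by omega) (by omega); simpa [Nat.dist] using this
      have := wordDist_nat_dist hS (σ 0) (τ t) (σ i)
      rw [e1, e2] at this
      have hsym : wordDist S (τ t) (σ i) = wordDist S (σ i) (τ t) := wordDist_symm hS _ _
      calc Nat.dist t i ≤ wordDist S (τ t) (σ i) := this
        _ = wordDist S (σ i) (τ t) := hsym
        _ ≤ δ := hdp
    have htri := wordDist_triangle hS (σ i) (τ t) (τ i)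
    have hlast : wordDist S (τ t) (τ i) = Nat.dist t i := hτ t i ht (by omega)
    omega

lemma asymp_refl (c : ℕ → G) : Asymptotic (wordDist S) c c :=
  ⟨0, fun t => ⟨t, by rw [wordDist_self]⟩, fun t => ⟨t, by rw [wordDist_self]⟩⟩

lemma asymp_symm {c c' : ℕ → G} (h : Asymptotic (wordDist S) c c') :
    Asymptotic (wordDist S) c' c := by
  obtain ⟨K, h1, h2⟩ := h
  exact ⟨K, h2, h1⟩

lemma asymp_trans (hS : IsFinSymmGenSet S) {a b c : ℕ → G}
    (h1 : Asymptotic (wordDist S) a b) (h2 : Asymptotic (wordDist S) b c) :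
    Asymptotic (wordDist S) a c := by
  obtain ⟨K₁, h11, h12⟩ := h1
  obtain ⟨K₂, h21, h22⟩ := h2
  refine ⟨K₁ + K₂, fun t => ?_, fun s => ?_⟩
  · obtain ⟨s₁, hs₁⟩ := h11 t
    obtain ⟨s₂, hs₂⟩ := h21 s₁
    exact ⟨s₂, le_trans (wordDist_triangle hS (a t) (b s₁) (c s₂)) (by omega)⟩
  · obtain ⟨t₁, ht₁⟩ := h22 s
    obtain ⟨t₂, ht₂⟩ := h12 t₁
    exact ⟨t₂, le_trans (wordDist_triangle hS (c s) (b t₁) (a t₂)) (by omega)⟩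

lemma asymp_equivalence (hS : IsFinSymmGenSet S) :
    Equivalence (fun c c' : GeodesicRays (wordDist S) => Asymptotic (wordDist S) c.1 c'.1) :=
  ⟨fun c => asymp_refl c.1, fun h => asymp_symm h, fun h1 h2 => asymp_trans hS h1 h2⟩

lemma asymp_of_mk_eq (hS : IsFinSymmGenSet S) {c c' : GeodesicRays (wordDist S)}
    (h : (Quot.mk (fun a b : GeodesicRays (wordDist S) => Asymptotic (wordDist S) a.1 b.1) c) =
         Quot.mk _ c') :
    Asymptotic (wordDist S) c.1 c'.1 :=
  ((asymp_equivalence hS).eqvGen_iff).mp (Quot.eqvGen_exact h)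

/-- Claim B : asymptotic geodesic rays with the same start point `2δ`-fellow-travel
forever. -/
lemma same_start_close (hS : IsFinSymmGenSet S) (hhyp : DiscHyperbolic (wordDist S) δ)
    {α β : ℕ → G} (hα : IsGeodesicRay (wordDist S) α) (hβ : IsGeodesicRay (wordDist S) β)
    (h0 : α 0 = β 0) (hasym : Asymptotic (wordDist S) α β) :
    ∀ j, wordDist S (α j) (β j) ≤ 2 * δ := by
  intro j
  obtain ⟨K, hK1, hK2⟩ := hasym
  obtain ⟨s, hs⟩ := hK1 (j + K + δ + 1)
  exact comp_lemma hS hhyp α β (j + K + δ + 1) s K h0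
    (fun i j _ _ => hα i j) (fun i j _ _ => hβ i j) hs j (le_refl _)

/-- Sub-lemma F : a geodesic ray from `1` asymptotic to a ray `u` passes `3δ`-close
to every sufficiently deep point of `u`. -/
lemma shadow_lemma (hS : IsFinSymmGenSet S) (hhyp : DiscHyperbolic (wordDist S) δ)
    {α u : ℕ → G} (hα : IsGeodesicRay (wordDist S) α) (hu : IsGeodesicRay (wordDist S) u)
    (hα0 : α 0 = 1) (hasym : Asymptotic (wordDist S) α u) (N : ℕ)
    (hN : 2 * (wordDist S 1 (u 0)) + δ + 1 ≤ N) :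
    ∃ i, wordDist S (u N) (α i) ≤ 3 * δ := by
  set r := wordDist S 1 (u 0) with hrdef
  obtain ⟨K, hK1, hK2⟩ := hasym
  set T := N + 2 * r + K + 2 * δ + 2 with hTdef
  obtain ⟨tT, htT⟩ := hK2 T
  obtain ⟨σ, hσ⟩ := exists_geodesicSeg hS 1 (u T)
  set L := wordDist S 1 (u T) with hLdef
  obtain ⟨τ₀, hτ₀⟩ := exists_geodesicSeg hS 1 (u 0)
  have hu0T : wordDist S (u 0) (u T) = T := by simpa [Nat.dist] using hu 0 T
  have hu0N : wordDist S (u 0) (u N) = N := by simpa [Nat.dist] using hu 0 N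
  have hr10 : wordDist S (u 0) 1 = r := by rw [wordDist_symm hS]
  have hL_ge : T ≤ L + r := by
    have := wordDist_triangle hS (u 0) 1 (u T)
    omega
  have hL_le : L ≤ T + r := by
    have := wordDist_triangle hS 1 (u 0) (u T)
    omega
  -- triangle (u 0) (u T) 1 with sides u, reversed σ, τ₀
  have hseg_u : IsGeodesicSeg (wordDist S) u (u 0) (u T) := by
    refine ⟨rfl, by rw [hu0T], fun i j _ _ => hu i j⟩
  have hσL : σ L = u T := hσ.2.1
  have hdTL : wordDist S (u T) 1 = L := by rw [wordDist_symm hS]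
  have hseg_ρ : IsGeodesicSeg (wordDist S) (fun k => σ (L - k)) (u T) 1 := by
    refine ⟨by simpa using hσL, ?_, ?_⟩
    · rw [hdTL]; simpa using hσ.1
    · intro a c ha hc
      rw [hdTL] at ha hc
      have := hσ.2.2 (L - a) (L - c) (by omega) (by omega)
      rw [this]
      simp [Nat.dist]; omega
  obtain ⟨p, hp, hdp⟩ := hhyp (u 0) (u T) 1 u (fun k => σ (L - k)) τ₀
    hseg_u hseg_ρ hτ₀ N (by rw [hu0T]; omega)
  simp only [Set.mem_union, Set.mem_image, Set.mem_Iic] at hp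
  rcases hp with ⟨k, hk, rfl⟩ | ⟨k, hk, rfl⟩
  · -- point on σ
    rw [hdTL] at hk
    set i₀ := L - k with hi₀def
    have hi₀L : i₀ ≤ L := by omega
    -- i₀ is close to N + r
    have hσ0i : wordDist S 1 (σ i₀) = i₀ := by
      have := hσ.2.2 0 i₀ (by omega) (by omega)
      rw [hσ.1] at this
      simpa [Nat.dist] using this
    have h1N : wordDist S 1 (u N) ≤ N + r := by
      have := wordDist_triangle hS 1 (u 0) (u N)
      omega
    have hi₀_le : i₀ ≤ N + r + δ := by
      have htri := wordDist_triangle hS 1 (u N) (σ i₀)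
      omega
    -- compare σ with α
    have hcomp := comp_lemma hS hhyp σ α L tT K (by rw [hσ.1, hα0])
      (fun i j hi hj => hσ.2.2 i j (by omega) (by omega))
      (fun i j _ _ => hα i j)
      (by rw [hσL]; exact htT)
      i₀ (by omega)
    refine ⟨i₀, ?_⟩
    have := wordDist_triangle hS (u N) (σ i₀) (α i₀)
    omega
  · -- point on the short side [1, u 0] : contradiction
    exfalso
    have hτk : wordDist S 1 (τ₀ k) = k := by
      have := hτ₀.2.2 0 k (by omega) hk
      rw [hτ₀.1] at this
      simpa [Nat.dist] using this
    have h1N : N ≤ r + wordDist S 1 (u N) := by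
      have := wordDist_triangle hS (u 0) 1 (u N)
      omega
    have h2 := wordDist_triangle hS 1 (τ₀ k) (u N)
    have h3 : wordDist S (τ₀ k) (u N) = wordDist S (u N) (τ₀ k) := wordDist_symm hS _ _
    omega

end GeomAux


section Konig
variable {G : Type*} [Group G] {S : Set G} {δ : ℕ}

/-- Every geodesic ray is asymptotic to a geodesic ray based at `1`. -/
lemma exists_ray_from_one (hS : IsFinSymmGenSet S) (hhyp : DiscHyperbolic (wordDist S) δ)
    (u : ℕ → G) (hu : IsGeodesicRay (wordDist S) u) :
    ∃ γ : ℕ → G, IsGeodesicRay (wordDist S) γ ∧ γ 0 = 1 ∧ Asymptotic (wordDist S) γ u := by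
  classical
  set r := wordDist S 1 (u 0) with hrdef
  have hσex : ∀ n : ℕ, ∃ c, IsGeodesicSeg (wordDist S) c 1 (u n) :=
    fun n => exists_geodesicSeg hS 1 (u n)
  choose σ hσ using hσex
  set ℓ : ℕ → ℕ := fun n => wordDist S 1 (u n) with hℓdef
  have hu0n : ∀ n, wordDist S (u 0) (u n) = n := fun n => by simpa [Nat.dist] using hu 0 n
  have hr01 : wordDist S (u 0) 1 = r := by rw [hrdef, wordDist_symm hS]
  have hℓ_lb : ∀ n, n ≤ ℓ n + r := by
    intro n
    have h1 := wordDist_triangle hS (u 0) 1 (u n)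
    have h2 := hu0n n
    simp only [hℓdef]
    omega
  have hσdist : ∀ n i j, i ≤ ℓ n → j ≤ ℓ n → wordDist S (σ n i) (σ n j) = Nat.dist i j :=
    fun n i j hi hj => (hσ n).2.2 i j hi hj
  have hσ1 : ∀ n i, i ≤ ℓ n → wordDist S 1 (σ n i) = i := by
    intro n i hi
    have := hσdist n 0 i (by omega) hi
    rw [(hσ n).1] at this
    simpa [Nat.dist] using this
  set StProp : ℕ → Set ℕ → Prop := fun k A => A.Infinite ∧ (∀ n ∈ A, k ≤ ℓ n) ∧
      (∀ n ∈ A, ∀ n' ∈ A, ∀ i ≤ k, σ n i = σ n' i) with hStdef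
  have hbase : StProp 0 Set.univ := by
    refine ⟨Set.infinite_univ, fun n _ => Nat.zero_le _, ?_⟩
    intro n _ n' _ i hi
    have : i = 0 := by omega
    rw [this, (hσ n).1, (hσ n').1]
  have hstep : ∀ k (A : Set ℕ), StProp k A → ∃ B, B ⊆ A ∧ StProp (k+1) B := by
    rintro k A ⟨hAinf, hAℓ, hAagree⟩
    set A' := A ∩ {n | k + 1 ≤ ℓ n} with hA'def
    have hA'inf : A'.Infinite := by
      have hfin : {n : ℕ | ¬ (k+1 ≤ ℓ n)}.Finite := by
        apply Set.Finite.subset (Set.finite_Iic (k + r))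
        intro n hn
        simp only [Set.mem_setOf_eq, not_le] at hn
        have := hℓ_lb n
        simp only [Set.mem_Iic]
        omega
      have hAeq : A' = A \ {n | ¬ (k+1 ≤ ℓ n)} := by
        ext n
        simp only [hA'def, Set.mem_inter_iff, Set.mem_setOf_eq, Set.mem_diff, not_not]
      rw [hAeq]
      exact Set.Infinite.diff hAinf hfin
    have hball : ∀ n ∈ A', σ n (k+1) ∈ {g : G | wordDist S 1 g ≤ k+1} := by
      intro n hn
      have hle : k+1 ≤ ℓ n := hn.2
      have := hσ1 n (k+1) hle
      simp only [Set.mem_setOf_eq]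
      omega
    have hexg : ∃ g, {n | n ∈ A' ∧ σ n (k+1) = g}.Infinite := by
      by_contra hcon
      push_neg at hcon
      have hsub : A' ⊆ ⋃ g ∈ {g : G | wordDist S 1 g ≤ k+1}, {n | n ∈ A' ∧ σ n (k+1) = g} := by
        intro n hn
        exact Set.mem_biUnion (hball n hn) ⟨hn, rfl⟩
      exact hA'inf (Set.Finite.subset
        (Set.Finite.biUnion (ball_finite hS (k+1)) (fun g _ => hcon g)) hsub)
    obtain ⟨g, hg⟩ := hexg
    refine ⟨{n | n ∈ A' ∧ σ n (k+1) = g}, fun n hn => hn.1.1, hg, fun n hn => hn.1.2, ?_⟩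
    intro n hn n' hn' i hi
    rcases Nat.lt_or_ge i (k+1) with hik | hik
    · exact hAagree n hn.1.1 n' hn'.1.1 i (by omega)
    · have hieq : i = k+1 := by omega
      rw [hieq, hn.2, hn'.2]
  let T : ∀ _ : ℕ, {A : Set ℕ // StProp _ A} := fun k =>
    Nat.rec (motive := fun k => {A : Set ℕ // StProp k A}) ⟨Set.univ, hbase⟩
      (fun k ih => ⟨(hstep k ih.1 ih.2).choose, (hstep k ih.1 ih.2).choose_spec.2⟩) k
  have hTmono_succ : ∀ k, (T (k+1)).1 ⊆ (T k).1 := by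
    intro k
    exact (hstep k (T k).1 (T k).2).choose_spec.1
  have hTmono : ∀ {k k' : ℕ}, k ≤ k' → (T k').1 ⊆ (T k).1 := by
    intro k k' h
    induction h with
    | refl => exact subset_rfl
    | step _ ih => exact subset_trans (hTmono_succ _) ih
  have hTne : ∀ k, (T k).1.Nonempty := fun k => (T k).2.1.nonempty
  have hn₀ : ∀ k, (hTne k).choose ∈ (T k).1 := fun k => (hTne k).choose_spec
  set n₀ : ℕ → ℕ := fun k => (hTne k).choose with hn₀def
  set γ : ℕ → G := fun k => σ (n₀ k) k with hγdef
  have hagree : ∀ i k, i ≤ k → ∀ n ∈ (T k).1, σ n i = γ i := by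
    intro i k hik n hn
    exact (T i).2.2.2 n (hTmono hik hn) (n₀ i) (hn₀ i) i (le_refl i)
  have hℓT : ∀ k, ∀ n ∈ (T k).1, k ≤ ℓ n := fun k n hn => (T k).2.2.1 n hn
  have hγray' : ∀ i j, i ≤ j → wordDist S (γ i) (γ j) = Nat.dist i j := by
    intro i j hij
    have hn := hn₀ j
    have h1 : σ (n₀ j) i = γ i := hagree i j hij _ hn
    have h2 : σ (n₀ j) j = γ j := hagree j j (le_refl j) _ hn
    have hℓj : j ≤ ℓ (n₀ j) := hℓT j _ hn
    rw [← h1, ← h2]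
    exact hσdist (n₀ j) i j (by omega) (by omega)
  have hγray : IsGeodesicRay (wordDist S) γ := by
    intro i j
    rcases le_total i j with hij | hij
    · exact hγray' i j hij
    · rw [wordDist_symm hS, Nat.dist_comm]
      exact hγray' j i hij
  have hγ0 : γ 0 = 1 := (hσ (n₀ 0)).1
  refine ⟨γ, hγray, hγ0, ⟨r + δ, ?_, ?_⟩⟩
  · -- ∀ t, ∃ s, d (γ t) (u s) ≤ r + δ
    intro t
    set n := n₀ t with hndef
    have hn : n ∈ (T t).1 := hn₀ t
    have hℓt : t ≤ ℓ n := hℓT t _ hn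
    have hγt : σ n t = γ t := hagree t t le_rfl n hn
    obtain ⟨τ₀, hτ₀⟩ := exists_geodesicSeg hS (u 0) 1
    have hdn0 : wordDist S (u n) (u 0) = n := by rw [wordDist_symm hS]; exact hu0n n
    have hseg_rev : IsGeodesicSeg (wordDist S) (fun k => u (n - k)) (u n) (u 0) := by
      refine ⟨by simp, by rw [hdn0]; simp, ?_⟩
      intro a b ha hb
      rw [hdn0] at ha hb
      rw [hu (n-a) (n-b)]
      simp [Nat.dist]; omega
    obtain ⟨p, hp, hdp⟩ := hhyp 1 (u n) (u 0) (σ n) (fun k => u (n - k)) τ₀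
      (hσ n) hseg_rev hτ₀ t hℓt
    rw [hγt] at hdp
    simp only [Set.mem_union, Set.mem_image, Set.mem_Iic] at hp
    rcases hp with ⟨k, hk, rfl⟩ | ⟨k, hk, rfl⟩
    · exact ⟨n - k, le_trans hdp (by omega)⟩
    · -- p on geodesic from u 0 to 1
      refine ⟨0, ?_⟩
      have hd0k : wordDist S (u 0) (τ₀ k) = k := by
        have := hτ₀.2.2 0 k (by omega) hk
        rw [hτ₀.1] at this
        simpa [Nat.dist] using this
      have hk_r : k ≤ r := le_trans hk (le_of_eq hr01)
      have htri := wordDist_triangle hS (γ t) (τ₀ k) (u 0)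
      have hsymk : wordDist S (τ₀ k) (u 0) = k := by rw [wordDist_symm hS]; exact hd0k
      omega
  · -- ∀ s, ∃ t, d (u s) (γ t) ≤ r + δ
    intro s
    set m := s + r + δ + 1 with hmdef
    obtain ⟨n, hnT, hns⟩ := (T m).2.1.exists_gt s
    have hℓm : m ≤ ℓ n := hℓT m n hnT
    obtain ⟨τ₀, hτ₀⟩ := exists_geodesicSeg hS 1 (u 0)
    have hseg_u : IsGeodesicSeg (wordDist S) u (u 0) (u n) := by
      refine ⟨rfl, by rw [hu0n], fun i j _ _ => hu i j⟩
    have hdun1 : wordDist S (u n) 1 = ℓ n := by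
      simp only [hℓdef]; rw [wordDist_symm hS]
    have hseg_revσ : IsGeodesicSeg (wordDist S) (fun k => σ n (ℓ n - k)) (u n) 1 := by
      refine ⟨by simpa using (hσ n).2.1, by rw [hdun1]; simpa using (hσ n).1, ?_⟩
      intro a b ha hb
      rw [hdun1] at ha hb
      rw [hσdist n (ℓ n - a) (ℓ n - b) (by omega) (by omega)]
      simp [Nat.dist]; omega
    obtain ⟨p, hp, hdp⟩ := hhyp (u 0) (u n) 1 u (fun k => σ n (ℓ n - k)) τ₀
      hseg_u hseg_revσ hτ₀ s (by rw [hu0n]; omega)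
    simp only [Set.mem_union, Set.mem_image, Set.mem_Iic] at hp
    rcases hp with ⟨k, hk, rfl⟩ | ⟨k, hk, rfl⟩
    · -- p on reversed σ n
      rw [hdun1] at hk
      set i₀ := ℓ n - k with hi₀def
      have hi₀ℓ : i₀ ≤ ℓ n := by omega
      have h1i₀ : wordDist S 1 (σ n i₀) = i₀ := hσ1 n i₀ hi₀ℓ
      have h1us : wordDist S 1 (u s) ≤ r + s := by
        have h1 := wordDist_triangle hS 1 (u 0) (u s)
        have h2 : wordDist S (u 0) (u s) = s := hu0n s
        omega
      have hi₀m : i₀ ≤ m := by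
        have htri := wordDist_triangle hS 1 (u s) (σ n i₀)
        omega
      have hγi₀ : σ n i₀ = γ i₀ := hagree i₀ m hi₀m n hnT
      rw [hγi₀] at hdp
      exact ⟨i₀, le_trans hdp (by omega)⟩
    · -- p on geodesic from 1 to u 0
      refine ⟨0, ?_⟩
      rw [hγ0]
      have hd0k : wordDist S 1 (τ₀ k) = k := by
        have := hτ₀.2.2 0 k (by omega) hk
        rw [hτ₀.1] at this
        simpa [Nat.dist] using this
      have hk_r : k ≤ r := by
        have : wordDist S 1 (u 0) = r := rfl
        omega
      have htri := wordDist_triangle hS (u s) (τ₀ k) 1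
      have hsymk : wordDist S (τ₀ k) 1 = k := by rw [wordDist_symm hS]; exact hd0k
      omega

end Konig


section MetricAux
variable {G : Type*} [Group G]

/-- Convenient name for the canonical map to the boundary. -/
def mkB (S : Set G) (c : GeodesicRays (wordDist S)) : GromovBoundary (wordDist S) :=
  Quot.mk _ c

/-- Two boundary points are `j`-close if they admit representatives based at `1`
that `2δ`-fellow-travel up to time `j`. -/
def CloseAt (S : Set G) (δ : ℕ) (x y : GromovBoundary (wordDist S)) (j : ℕ) : Prop :=
  ∃ c c' : GeodesicRays (wordDist S), c.1 0 = 1 ∧ c'.1 0 = 1 ∧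
    mkB S c = x ∧ mkB S c' = y ∧ ∀ i ≤ j, wordDist S (c.1 i) (c'.1 i) ≤ 2 * δ

variable {S : Set G} {δ : ℕ}

lemma exists_rep_one (hS : IsFinSymmGenSet S) (hhyp : DiscHyperbolic (wordDist S) δ)
    (x : GromovBoundary (wordDist S)) :
    ∃ c : GeodesicRays (wordDist S), c.1 0 = 1 ∧ mkB S c = x := by
  obtain ⟨c₀, rfl⟩ := Quot.exists_rep x
  obtain ⟨γ, hγray, hγ0, hasym⟩ := exists_ray_from_one hS hhyp c₀.1 c₀.2
  exact ⟨⟨γ, hγray⟩, hγ0, Quot.sound hasym⟩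

lemma close_mono {x y : GromovBoundary (wordDist S)} {j j' : ℕ} (h : CloseAt S δ x y j)
    (hj : j' ≤ j) : CloseAt S δ x y j' := by
  obtain ⟨c, c', h1, h2, h3, h4, h5⟩ := h
  exact ⟨c, c', h1, h2, h3, h4, fun i hi => h5 i (le_trans hi hj)⟩

lemma close_refl (hS : IsFinSymmGenSet S) (hhyp : DiscHyperbolic (wordDist S) δ)
    (x : GromovBoundary (wordDist S)) (j : ℕ) : CloseAt S δ x x j := by
  obtain ⟨c, h0, hmk⟩ := exists_rep_one hS hhyp x
  exact ⟨c, c, h0, h0, hmk, hmk, fun i _ => by rw [wordDist_self]; omega⟩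

lemma close_symm (hS : IsFinSymmGenSet S) {x y : GromovBoundary (wordDist S)} {j : ℕ}
    (h : CloseAt S δ x y j) : CloseAt S δ y x j := by
  obtain ⟨c, c', h1, h2, h3, h4, h5⟩ := h
  exact ⟨c', c, h2, h1, h4, h3, fun i hi => by
    rw [wordDist_symm hS]; exact h5 i hi⟩

lemma close_zero (hS : IsFinSymmGenSet S) (hhyp : DiscHyperbolic (wordDist S) δ)
    (x y : GromovBoundary (wordDist S)) : CloseAt S δ x y 0 := by
  obtain ⟨c, h0, hmk⟩ := exists_rep_one hS hhyp x
  obtain ⟨c', h0', hmk'⟩ := exists_rep_one hS hhyp y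
  refine ⟨c, c', h0, h0', hmk, hmk', fun i hi => ?_⟩
  have : i = 0 := by omega
  rw [this, h0, h0', wordDist_self]
  omega

lemma close_trans_loss (hS : IsFinSymmGenSet S) (hhyp : DiscHyperbolic (wordDist S) δ)
    {x y z : GromovBoundary (wordDist S)} {j : ℕ}
    (h1 : CloseAt S δ x y j) (h2 : CloseAt S δ y z j) :
    CloseAt S δ x z (j - (7 * δ + 1)) := by
  rcases Nat.lt_or_ge j (7 * δ + 1) with hj | hj
  · have : j - (7 * δ + 1) = 0 := by omega
    rw [this]
    exact close_zero hS hhyp x z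
  obtain ⟨c₁, c₂, e1, e2, e3, e4, e5⟩ := h1
  obtain ⟨c₃, c₄, f1, f2, f3, f4, f5⟩ := h2
  have hmid : Asymptotic (wordDist S) c₂.1 c₃.1 :=
    asymp_of_mk_eq hS (e4.trans f3.symm)
  have hmid2δ : ∀ i, wordDist S (c₂.1 i) (c₃.1 i) ≤ 2 * δ :=
    same_start_close hS hhyp c₂.2 c₃.2 (by rw [e2, f1]) hmid
  have h6 : ∀ i ≤ j, wordDist S (c₁.1 i) (c₄.1 i) ≤ 6 * δ := by
    intro i hi
    have t1 := wordDist_triangle hS (c₁.1 i) (c₂.1 i) (c₄.1 i)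
    have t2 := wordDist_triangle hS (c₂.1 i) (c₃.1 i) (c₄.1 i)
    have := e5 i hi
    have := hmid2δ i
    have := f5 i hi
    omega
  refine ⟨c₁, c₄, e1, f2, e3, f4, fun i hi => ?_⟩
  exact comp_lemma hS hhyp c₁.1 c₄.1 j j (6 * δ) (by rw [e1, f2])
    (fun a b _ _ => c₁.2 a b) (fun a b _ _ => c₄.2 a b) (h6 j le_rfl) i (by omega)

/-- Rays agreeing on a long initial segment give close boundary points. -/
lemma close_cylinder (hS : IsFinSymmGenSet S) (hhyp : DiscHyperbolic (wordDist S) δ)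
    (u v : GeodesicRays (wordDist S)) (M J : ℕ)
    (hagree : ∀ i ≤ M, u.1 i = v.1 i)
    (hM1 : 2 * wordDist S 1 (u.1 0) + δ + 1 ≤ M)
    (hM2 : J + wordDist S 1 (u.1 0) + 3 * δ + (7 * δ + 1) ≤ M) :
    CloseAt S δ (mkB S u) (mkB S v) J := by
  set r := wordDist S 1 (u.1 0) with hrdef
  obtain ⟨γu, hγuray, hγu0, hγuasym⟩ := exists_ray_from_one hS hhyp u.1 u.2
  obtain ⟨γv, hγvray, hγv0, hγvasym⟩ := exists_ray_from_one hS hhyp v.1 v.2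
  have hv0 : v.1 0 = u.1 0 := (hagree 0 (by omega)).symm
  obtain ⟨i₁, hi₁⟩ := shadow_lemma hS hhyp hγuray u.2 hγu0 hγuasym M hM1
  obtain ⟨i₂, hi₂⟩ := shadow_lemma hS hhyp hγvray v.2 hγv0 hγvasym M
    (by rw [hv0]; exact hM1)
  rw [← hagree M le_rfl] at hi₂
  have h612 : wordDist S (γu i₁) (γv i₂) ≤ 6 * δ := by
    have t1 := wordDist_triangle hS (γu i₁) (u.1 M) (γv i₂)
    have h1 : wordDist S (γu i₁) (u.1 M) = wordDist S (u.1 M) (γu i₁) := wordDist_symm hS _ _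
    omega
  -- lower bound on i₁
  have h1uM : M ≤ r + wordDist S 1 (u.1 M) := by
    have ht := wordDist_triangle hS (u.1 0) 1 (u.1 M)
    have h2 : wordDist S (u.1 0) (u.1 M) = M := by simpa [Nat.dist] using u.2 0 M
    have h3 : wordDist S (u.1 0) 1 = r := by rw [hrdef, wordDist_symm hS]
    omega
  have hi₁eq : wordDist S 1 (γu i₁) = i₁ := by
    have := hγuray 0 i₁
    rw [hγu0] at this
    simpa [Nat.dist] using this
  have hi₁lb : M ≤ r + 3 * δ + i₁ := by
    have ht := wordDist_triangle hS 1 (γu i₁) (u.1 M)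
    have hsym : wordDist S (γu i₁) (u.1 M) = wordDist S (u.1 M) (γu i₁) :=
      wordDist_symm hS _ _
    omega
  have hcomp := comp_lemma hS hhyp γu γv i₁ i₂ (6 * δ) (by rw [hγu0, hγv0])
    (fun a b _ _ => hγuray a b) (fun a b _ _ => hγvray a b) h612
  refine ⟨⟨γu, hγuray⟩, ⟨γv, hγvray⟩, hγu0, hγv0, Quot.sound hγuasym, Quot.sound hγvasym,
    fun i hi => ?_⟩
  exact hcomp i (by omega)

/-- Representing DSG rays of `CloseAt`-close boundary points fellow-travel. -/
lemma close_mates (hS : IsFinSymmGenSet S) (hhyp : DiscHyperbolic (wordDist S) δ)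
    {x x' : GromovBoundary (wordDist S)} {l : ℕ}
    (h : CloseAt S δ x x' (l + (7 * δ + 1)))
    (m m' : DSGs (wordDist S) S)
    (hm : Qmap (wordDist S) S m = x) (hm' : Qmap (wordDist S) S m' = x') :
    ∀ j ≤ l, wordDist S (dsgRay m.1 1 j) (dsgRay m'.1 1 j) ≤ 2 * δ := by
  obtain ⟨c, c', e1, e2, e3, e4, e5⟩ := h
  have hm0 : dsgRay m.1 1 0 = 1 := rfl
  have hm0' : dsgRay m'.1 1 0 = 1 := rfl
  have ha : Asymptotic (wordDist S) (dsgRay m.1 1) c.1 := by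
    have : mkB S ⟨dsgRay m.1 1, m.2.2.1 1⟩ = mkB S c := by
      rw [e3]; exact hm
    exact asymp_of_mk_eq hS this
  have ha' : Asymptotic (wordDist S) (dsgRay m'.1 1) c'.1 := by
    have : mkB S ⟨dsgRay m'.1 1, m'.2.2.1 1⟩ = mkB S c' := by
      rw [e4]; exact hm'
    exact asymp_of_mk_eq hS this
  have hclose : ∀ i, wordDist S (dsgRay m.1 1 i) (c.1 i) ≤ 2 * δ :=
    same_start_close hS hhyp (m.2.2.1 1) c.2 (by rw [hm0, e1]) ha
  have hclose' : ∀ i, wordDist S (dsgRay m'.1 1 i) (c'.1 i) ≤ 2 * δ :=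
    same_start_close hS hhyp (m'.2.2.1 1) c'.2 (by rw [hm0', e2]) ha'
  have h6 : ∀ i ≤ l + (7 * δ + 1),
      wordDist S (dsgRay m.1 1 i) (dsgRay m'.1 1 i) ≤ 6 * δ := by
    intro i hi
    have t1 := wordDist_triangle hS (dsgRay m.1 1 i) (c.1 i) (dsgRay m'.1 1 i)
    have t2 := wordDist_triangle hS (c.1 i) (c'.1 i) (dsgRay m'.1 1 i)
    have h3 : wordDist S (c'.1 i) (dsgRay m'.1 1 i)
        = wordDist S (dsgRay m'.1 1 i) (c'.1 i) := wordDist_symm hS _ _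
    have := hclose i
    have := hclose' i
    have := e5 i hi
    omega
  intro j hj
  exact comp_lemma hS hhyp (dsgRay m.1 1) (dsgRay m'.1 1)
    (l + (7 * δ + 1)) (l + (7 * δ + 1)) (6 * δ) (by rw [hm0, hm0'])
    (fun a b _ _ => m.2.2.1 1 a b) (fun a b _ _ => m'.2.2.1 1 a b)
    (h6 _ le_rfl) j (by omega)

end MetricAux


section RhoAux
variable {G : Type*} [Group G]

noncomputable def cpow (q : ℕ) : ℝ := (2⁻¹ : ℝ) ^ q

lemma cpow_pos (q : ℕ) : 0 < cpow q := pow_pos (by norm_num) q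

lemma cpow_le_one (q : ℕ) : cpow q ≤ 1 := pow_le_one₀ (by norm_num) (by norm_num)

lemma cpow_anti {a b : ℕ} (h : a ≤ b) : cpow b ≤ cpow a :=
  pow_le_pow_of_le_one (by norm_num) (by norm_num) h

lemma cpow_strict {a b : ℕ} (h : a < b) : cpow b < cpow a :=
  pow_lt_pow_right_of_lt_one₀ (by norm_num) (by norm_num) h

lemma cpow_pred {q : ℕ} (h : 1 ≤ q) : cpow (q - 1) = 2 * cpow q := by
  obtain ⟨q', rfl⟩ : ∃ q', q = q' + 1 := ⟨q - 1, by omega⟩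
  simp only [Nat.add_sub_cancel, cpow, pow_succ]
  ring

lemma exists_cpow_lt {ε : ℝ} (hε : 0 < ε) : ∃ q, cpow q < ε :=
  exists_pow_lt_of_lt_one hε (by norm_num)

/-- The set of scales at which two boundary points are close. -/
def QsetD (S : Set G) (δ : ℕ) (x y : GromovBoundary (wordDist S)) : Set ℕ :=
  {q | CloseAt S δ x y (q * (2 * (7 * δ + 1)))}

/-- The visual quasi-metric on the boundary. -/
noncomputable def rhoD (S : Set G) (δ : ℕ) (x y : GromovBoundary (wordDist S)) : ℝ :=
  sInf (cpow '' QsetD S δ x y)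

variable {S : Set G} {δ : ℕ}

lemma qset_zero_mem (hS : IsFinSymmGenSet S) (hhyp : DiscHyperbolic (wordDist S) δ)
    (x y : GromovBoundary (wordDist S)) : 0 ∈ QsetD S δ x y := by
  show CloseAt S δ x y (0 * (2 * (7 * δ + 1)))
  rw [Nat.zero_mul]
  exact close_zero hS hhyp x y

lemma qset_down {x y : GromovBoundary (wordDist S)} {q q' : ℕ}
    (h : q ∈ QsetD S δ x y) (hq : q' ≤ q) : q' ∈ QsetD S δ x y :=
  close_mono h (Nat.mul_le_mul_right _ hq)

lemma qimage_nonempty (hS : IsFinSymmGenSet S) (hhyp : DiscHyperbolic (wordDist S) δ)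
    (x y : GromovBoundary (wordDist S)) : (cpow '' QsetD S δ x y).Nonempty :=
  ⟨cpow 0, 0, qset_zero_mem hS hhyp x y, rfl⟩

lemma qimage_bddBelow (x y : GromovBoundary (wordDist S)) :
    BddBelow (cpow '' QsetD S δ x y) := by
  refine ⟨0, fun t ht => ?_⟩
  obtain ⟨q, _, rfl⟩ := ht
  exact le_of_lt (cpow_pos q)

lemma rho_nonneg (x y : GromovBoundary (wordDist S)) : 0 ≤ rhoD S δ x y := by
  by_cases hne : (cpow '' QsetD S δ x y).Nonempty
  · exact le_csInf hne (fun t ht => by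
      obtain ⟨q, _, rfl⟩ := ht; exact le_of_lt (cpow_pos q))
  · rw [rhoD, Set.not_nonempty_iff_eq_empty.mp hne, Real.sInf_empty]

lemma rho_le_of_close {x y : GromovBoundary (wordDist S)} {q : ℕ}
    (h : CloseAt S δ x y (q * (2 * (7 * δ + 1)))) : rhoD S δ x y ≤ cpow q :=
  csInf_le (qimage_bddBelow x y) ⟨q, h, rfl⟩

lemma rho_le_one (hS : IsFinSymmGenSet S) (hhyp : DiscHyperbolic (wordDist S) δ)
    (x y : GromovBoundary (wordDist S)) : rhoD S δ x y ≤ 1 := by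
  have := rho_le_of_close (δ := δ) (q := 0)
    (by rw [Nat.zero_mul]; exact close_zero hS hhyp x y)
  simpa [cpow] using this

lemma close_of_rho_le (hS : IsFinSymmGenSet S) (hhyp : DiscHyperbolic (wordDist S) δ)
    {x y : GromovBoundary (wordDist S)} {q : ℕ}
    (h : rhoD S δ x y ≤ cpow q) : CloseAt S δ x y (q * (2 * (7 * δ + 1))) := by
  rcases Nat.eq_zero_or_pos q with rfl | hq
  · rw [Nat.zero_mul]; exact close_zero hS hhyp x y
  have hlt : rhoD S δ x y < cpow (q - 1) := by
    rw [cpow_pred hq]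
    have := cpow_pos q
    linarith
  rw [rhoD] at hlt
  obtain ⟨t, ht, hlt'⟩ := (csInf_lt_iff (qimage_bddBelow x y)
    (qimage_nonempty hS hhyp x y)).mp hlt
  obtain ⟨q', hq', rfl⟩ := ht
  have hqq' : q ≤ q' := by
    by_contra hcon
    push_neg at hcon
    have : q' ≤ q - 1 := by omega
    exact absurd (cpow_anti this) (not_le.mpr hlt')
  exact qset_down hq' hqq'

lemma rho_symm (hS : IsFinSymmGenSet S) (x y : GromovBoundary (wordDist S)) :
    rhoD S δ x y = rhoD S δ y x := by
  unfold rhoD QsetD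
  congr 1
  ext t
  constructor <;> rintro ⟨q, hq, rfl⟩
  · exact ⟨q, close_symm hS hq, rfl⟩
  · exact ⟨q, close_symm hS hq, rfl⟩

lemma rho_self (hS : IsFinSymmGenSet S) (hhyp : DiscHyperbolic (wordDist S) δ)
    (x : GromovBoundary (wordDist S)) : rhoD S δ x x = 0 := by
  refine le_antisymm ?_ (rho_nonneg x x)
  by_contra hcon
  push_neg at hcon
  obtain ⟨q, hq⟩ := exists_cpow_lt hcon
  have : rhoD S δ x x ≤ cpow q :=
    rho_le_of_close (close_refl hS hhyp x _)
  linarith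

lemma rho_pos_attained (hS : IsFinSymmGenSet S) (hhyp : DiscHyperbolic (wordDist S) δ)
    {x y : GromovBoundary (wordDist S)} (h : 0 < rhoD S δ x y) :
    ∃ Q, rhoD S δ x y = cpow Q := by
  by_cases hb : BddAbove (QsetD S δ x y)
  · have hfin : (QsetD S δ x y).Finite := Set.finite_iff_bddAbove.mpr hb
    have := (qimage_nonempty hS hhyp x y).csInf_mem (hfin.image cpow)
    obtain ⟨Q, _, hQ⟩ := this
    exact ⟨Q, hQ.symm⟩
  · exfalso
    rw [not_bddAbove_iff] at hb
    have hall : ∀ q : ℕ, rhoD S δ x y ≤ cpow q := by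
      intro q
      obtain ⟨q', hq', hlt⟩ := hb q
      exact le_trans (csInf_le (qimage_bddBelow x y) ⟨q', hq', rfl⟩)
        (cpow_anti (le_of_lt hlt))
    obtain ⟨q, hq⟩ := exists_cpow_lt h
    exact absurd (hall q) (not_le.mpr hq)

/-- The crucial 4-point quasi-ultrametric inequality with multiplicative constant 2. -/
lemma rho_quad (hS : IsFinSymmGenSet S) (hhyp : DiscHyperbolic (wordDist S) δ)
    (x y z w : GromovBoundary (wordDist S)) :
    rhoD S δ x w ≤ 2 * max (rhoD S δ x y) (max (rhoD S δ y z) (rhoD S δ z w)) := by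
  have key : ∀ q : ℕ, rhoD S δ x y ≤ cpow q → rhoD S δ y z ≤ cpow q →
      rhoD S δ z w ≤ cpow q → rhoD S δ x w ≤ 2 * cpow q := by
    intro q h1 h2 h3
    rcases Nat.eq_zero_or_pos q with rfl | hq
    · have := rho_le_one hS hhyp x w
      have : cpow 0 = 1 := by simp [cpow]
      simp only [this]
      have := rho_le_one hS hhyp x w
      linarith
    · have c1 := close_of_rho_le hS hhyp h1
      have c2 := close_of_rho_le hS hhyp h2
      have c3 := close_of_rho_le hS hhyp h3
      have c12 := close_trans_loss hS hhyp c1 c2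
      have c3' : CloseAt S δ z w (q * (2 * (7 * δ + 1)) - (7 * δ + 1)) :=
        close_mono c3 (by omega)
      have c123 := close_trans_loss hS hhyp c12 c3'
      have harith : (q - 1) * (2 * (7 * δ + 1)) ≤
          q * (2 * (7 * δ + 1)) - (7 * δ + 1) - (7 * δ + 1) := by
        obtain ⟨q', rfl⟩ : ∃ q', q = q' + 1 := ⟨q - 1, by omega⟩
        have h1 : (q' + 1) * (2 * (7 * δ + 1)) = q' * (2 * (7 * δ + 1)) + 2 * (7 * δ + 1) := by
          ring
        simp only [Nat.add_sub_cancel]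
        rw [h1]
        omega
      have := rho_le_of_close (close_mono c123 harith)
      rw [cpow_pred hq] at this
      exact this
  set M := max (rhoD S δ x y) (max (rhoD S δ y z) (rhoD S δ z w)) with hM
  have hM0 : 0 ≤ M := le_trans (rho_nonneg x y) (le_max_left _ _)
  rcases eq_or_lt_of_le hM0 with hM00 | hMpos
  · -- M = 0
    have hall : ∀ q : ℕ, rhoD S δ x w ≤ 2 * cpow q := by
      intro q
      have hxy : rhoD S δ x y ≤ cpow q :=
        le_trans (le_trans (le_max_left _ _) (le_of_eq hM00.symm)) (le_of_lt (cpow_pos q))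
      have hyz : rhoD S δ y z ≤ cpow q :=
        le_trans (le_trans (le_trans (le_max_left _ _) (le_max_right _ _)) (le_of_eq hM00.symm))
          (le_of_lt (cpow_pos q))
      have hzw : rhoD S δ z w ≤ cpow q :=
        le_trans (le_trans (le_trans (le_max_right _ _) (le_max_right _ _)) (le_of_eq hM00.symm))
          (le_of_lt (cpow_pos q))
      exact key q hxy hyz hzw
    rw [← hM00]
    by_contra hcon
    push_neg at hcon
    rw [mul_zero] at hcon
    obtain ⟨q, hq⟩ := exists_cpow_lt (show (0:ℝ) < rhoD S δ x w / 2 by linarith)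
    have := hall q
    linarith
  · -- M > 0 : M equals one of the three rho's, hence is of the form cpow Q
    have hform : ∃ Q, M = cpow Q := by
      have hcases : M = rhoD S δ x y ∨ M = rhoD S δ y z ∨ M = rhoD S δ z w := by
        rw [hM]
        rcases max_cases (rhoD S δ x y) (max (rhoD S δ y z) (rhoD S δ z w)) with ⟨h, _⟩ | ⟨h, _⟩
        · left; exact h
        · rcases max_cases (rhoD S δ y z) (rhoD S δ z w) with ⟨h', _⟩ | ⟨h', _⟩
          · right; left; rw [h, h']
          · right; right; rw [h, h']
      rcases hcases with h | h | h <;>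
        [ (obtain ⟨Q, hQ⟩ := rho_pos_attained hS hhyp (h ▸ hMpos); exact ⟨Q, h.trans hQ⟩);
          (obtain ⟨Q, hQ⟩ := rho_pos_attained hS hhyp (h ▸ hMpos); exact ⟨Q, h.trans hQ⟩);
          (obtain ⟨Q, hQ⟩ := rho_pos_attained hS hhyp (h ▸ hMpos); exact ⟨Q, h.trans hQ⟩)]
    obtain ⟨Q, hQ⟩ := hform
    have h1 : rhoD S δ x y ≤ cpow Q := hQ ▸ le_max_left _ _
    have h2 : rhoD S δ y z ≤ cpow Q := hQ ▸ le_trans (le_max_left _ _) (le_max_right _ _)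
    have h3 : rhoD S δ z w ≤ cpow Q := hQ ▸ le_trans (le_max_right _ _) (le_max_right _ _)
    rw [hQ]
    exact key Q h1 h2 h3

end RhoAux


section FrinkAux
variable {G : Type*} [Group G]

noncomputable def chainSum (S : Set G) (δ : ℕ) (k : ℕ)
    (z : ℕ → GromovBoundary (wordDist S)) : ℝ :=
  ∑ i ∈ Finset.range k, rhoD S δ (z i) (z (i + 1))

variable {S : Set G} {δ : ℕ}

lemma chainSum_nonneg (k : ℕ) (z : ℕ → GromovBoundary (wordDist S)) :
    0 ≤ chainSum S δ k z :=
  Finset.sum_nonneg fun i _ => rho_nonneg _ _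

lemma chainSum_mono {k k' : ℕ} (h : k ≤ k') (z : ℕ → GromovBoundary (wordDist S)) :
    chainSum S δ k z ≤ chainSum S δ k' z := by
  apply Finset.sum_le_sum_of_subset_of_nonneg (Finset.range_subset_range.mpr h)
  intro i _ _
  exact rho_nonneg _ _

/-- Frink's chain lemma : the endpoint quasi-distance is at most twice any chain sum. -/
lemma frink (hS : IsFinSymmGenSet S) (hhyp : DiscHyperbolic (wordDist S) δ) :
    ∀ k (z : ℕ → GromovBoundary (wordDist S)), rhoD S δ (z 0) (z k) ≤ 2 * chainSum S δ k z := by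
  intro k
  induction k using Nat.strong_induction_on with
  | _ k IH =>
    intro z
    match k with
    | 0 =>
      rw [rho_self hS hhyp]
      have := chainSum_nonneg (S := S) (δ := δ) 0 z
      linarith
    | 1 =>
      have h0 := rho_nonneg (S := S) (δ := δ) (z 0) (z 1)
      simp only [chainSum, Finset.sum_range_one]
      linarith
    | (k + 2) =>
      classical
      set K := k + 2 with hK
      set S₀ := chainSum S δ K z with hS₀
      have hS₀0 : 0 ≤ S₀ := chainSum_nonneg K z
      set P : ℕ → Prop := fun j => chainSum S δ j z ≤ S₀ / 2 with hPdef
      have hP0 : P 0 := by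
        simp only [hPdef, chainSum, Finset.range_zero, Finset.sum_empty]
        linarith
      set p := Nat.findGreatest P (K - 1) with hpdef
      have hp : P p := Nat.findGreatest_spec (Nat.zero_le _) hP0
      have hpK : p ≤ K - 1 := Nat.findGreatest_le _
      have ha : rhoD S δ (z 0) (z p) ≤ S₀ := by
        have := IH p (by omega) z
        have hp' : chainSum S δ p z ≤ S₀ / 2 := hp
        linarith
      have hb : rhoD S δ (z p) (z (p + 1)) ≤ S₀ := by
        have := Finset.single_le_sum (f := fun i => rhoD S δ (z i) (z (i + 1)))
          (fun i _ => rho_nonneg _ _) (Finset.mem_range.mpr (show p < K by omega))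
        exact le_trans this (le_of_eq rfl)
      have hc : rhoD S δ (z (p + 1)) (z K) ≤ S₀ := by
        rcases Nat.lt_or_ge p (K - 1) with hpl | hpl
        · -- tail sum is < S₀/2
          have hnotP : ¬ P (p + 1) :=
            Nat.findGreatest_is_greatest (by rw [← hpdef]; omega) (by omega)
          have hKsplit : K = (p + 1) + (K - (p + 1)) := by omega
          have htail_eq : chainSum S δ K z
              = chainSum S δ (p + 1) z
                + ∑ i ∈ Finset.range (K - (p + 1)), rhoD S δ (z (p + 1 + i)) (z (p + 1 + i + 1)) := by
            calc chainSum S δ K z = chainSum S δ ((p + 1) + (K - (p + 1))) z := by rw [← hKsplit]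
              _ = _ := by
                  rw [chainSum, Finset.sum_range_add, ← chainSum]
          have htail : ∑ i ∈ Finset.range (K - (p + 1)),
              rhoD S δ (z (p + 1 + i)) (z (p + 1 + i + 1)) ≤ S₀ / 2 := by
            have h1 : ¬ (chainSum S δ (p+1) z ≤ S₀ / 2) := hnotP
            push_neg at h1
            have h2 : chainSum S δ K z = S₀ := rfl
            linarith [htail_eq]
          have htail2 : rhoD S δ (z (p+1)) (z K)
              ≤ 2 * ∑ i ∈ Finset.range (K - (p + 1)), rhoD S δ (z (p + 1 + i)) (z (p + 1 + i + 1)) := by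
            have h := IH (K - (p + 1)) (by omega) (fun i => z (p + 1 + i))
            have e2 : p + 1 + (K - (p + 1)) = K := by omega
            simpa [chainSum, e2, add_assoc] using h
          linarith
        · -- p = K - 1
          have : p + 1 = K := by omega
          rw [this, rho_self hS hhyp]
          linarith
      calc rhoD S δ (z 0) (z K)
          ≤ 2 * max (rhoD S δ (z 0) (z p))
              (max (rhoD S δ (z p) (z (p+1))) (rhoD S δ (z (p+1)) (z K))) :=
            rho_quad hS hhyp _ _ _ _
        _ ≤ 2 * S₀ := by
            have := max_le hb hc
            have := max_le ha (max_le hb hc)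
            linarith

/-- The visual (chain) metric on the boundary. -/
noncomputable def dvD (S : Set G) (δ : ℕ) (x y : GromovBoundary (wordDist S)) : ℝ :=
  sInf {t : ℝ | ∃ k z, z 0 = x ∧ z k = y ∧ t = chainSum S δ k z}

lemma dv_set_nonempty (x y : GromovBoundary (wordDist S)) :
    {t : ℝ | ∃ k z, z 0 = x ∧ z k = y ∧ t = chainSum S δ k z}.Nonempty := by
  refine ⟨chainSum S δ 1 (fun i => if i = 0 then x else y), 1, fun i => if i = 0 then x else y,
    by norm_num, by norm_num, rfl⟩

lemma dv_set_bddBelow (x y : GromovBoundary (wordDist S)) :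
    BddBelow {t : ℝ | ∃ k z, z 0 = x ∧ z k = y ∧ t = chainSum S δ k z} := by
  refine ⟨0, fun t ht => ?_⟩
  obtain ⟨k, z, _, _, rfl⟩ := ht
  exact chainSum_nonneg k z

lemma dv_nonneg (x y : GromovBoundary (wordDist S)) : 0 ≤ dvD S δ x y := by
  exact le_csInf (dv_set_nonempty x y) (fun t ht => by
    obtain ⟨k, z, _, _, rfl⟩ := ht
    exact chainSum_nonneg k z)

lemma dv_le_rho (x y : GromovBoundary (wordDist S)) : dvD S δ x y ≤ rhoD S δ x y := by
  apply csInf_le (dv_set_bddBelow x y)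
  refine ⟨1, fun i => if i = 0 then x else y, by norm_num, by norm_num, ?_⟩
  simp [chainSum]

lemma rho_le_two_dv (hS : IsFinSymmGenSet S) (hhyp : DiscHyperbolic (wordDist S) δ)
    (x y : GromovBoundary (wordDist S)) : rhoD S δ x y ≤ 2 * dvD S δ x y := by
  have h : rhoD S δ x y / 2 ≤ dvD S δ x y := by
    apply le_csInf (dv_set_nonempty x y)
    rintro t ⟨k, z, hz0, hzk, rfl⟩
    have := frink hS hhyp k z
    rw [hz0, hzk] at this
    linarith
  linarith

lemma dv_symm (hS : IsFinSymmGenSet S) (x y : GromovBoundary (wordDist S)) :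
    dvD S δ x y = dvD S δ y x := by
  have key : ∀ a b : GromovBoundary (wordDist S),
      {t : ℝ | ∃ k z, z 0 = a ∧ z k = b ∧ t = chainSum S δ k z} ⊆
      {t : ℝ | ∃ k z, z 0 = b ∧ z k = a ∧ t = chainSum S δ k z} := by
    rintro a b t ⟨k, z, hz0, hzk, rfl⟩
    refine ⟨k, fun i => z (k - i), by simpa using hzk, by simpa using hz0, ?_⟩
    rw [chainSum, chainSum]
    rw [← Finset.sum_range_reflect (fun j => rhoD S δ (z j) (z (j+1))) k]
    apply Finset.sum_congr rfl
    intro i hi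
    rw [Finset.mem_range] at hi
    have e1 : k - i = (k - 1 - i) + 1 := by omega
    have e2 : k - (i + 1) = k - 1 - i := by omega
    rw [e1, e2]
    exact rho_symm hS _ _
  unfold dvD
  exact le_antisymm (csInf_le_csInf (dv_set_bddBelow x y) (dv_set_nonempty y x) (key y x))
    (csInf_le_csInf (dv_set_bddBelow y x) (dv_set_nonempty x y) (key x y))

lemma dv_triangle (x y z : GromovBoundary (wordDist S)) :
    dvD S δ x z ≤ dvD S δ x y + dvD S δ y z := by
  have hglue : ∀ t₁ ∈ {t : ℝ | ∃ k w, w 0 = x ∧ w k = y ∧ t = chainSum S δ k w},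
      ∀ t₂ ∈ {t : ℝ | ∃ k w, w 0 = y ∧ w k = z ∧ t = chainSum S δ k w},
      dvD S δ x z ≤ t₁ + t₂ := by
    rintro t₁ ⟨k₁, w₁, h10, h1k, rfl⟩ t₂ ⟨k₂, w₂, h20, h2k, rfl⟩
    apply csInf_le (dv_set_bddBelow x z)
    refine ⟨k₁ + k₂, fun i => if i < k₁ then w₁ i else w₂ (i - k₁), ?_, ?_, ?_⟩
    · by_cases h : 0 < k₁
      · simp [h, h10]
      · have hk10 : k₁ = 0 := by omega
        subst hk10
        norm_num [h20]
        rw [← h1k, h10]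
    · have : ¬ (k₁ + k₂ < k₁) := by omega
      simp only [this, if_false]
      rw [Nat.add_sub_cancel_left, h2k]
    · rw [chainSum, chainSum, chainSum, Finset.sum_range_add]
      congr 1
      · apply Finset.sum_congr rfl
        intro i hi
        rw [Finset.mem_range] at hi
        have h1 : i < k₁ := hi
        rcases Nat.lt_or_ge (i+1) k₁ with h2 | h2
        · simp [h1, h2]
        · have : i + 1 = k₁ := by omega
          simp only [h1, if_true, this]
          have : ¬ (k₁ < k₁) := by omega
          simp only [this, if_false, Nat.sub_self]
          rw [h20, ← h1k]
      · apply Finset.sum_congr rfl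
        intro i _
        have h1 : ¬ (k₁ + i < k₁) := by omega
        have h2 : ¬ (k₁ + i + 1 < k₁) := by omega
        simp only [h1, h2, if_false]
        congr 2 <;> omega
  have step1 : ∀ t₁ ∈ {t : ℝ | ∃ k w, w 0 = x ∧ w k = y ∧ t = chainSum S δ k w},
      dvD S δ x z - t₁ ≤ dvD S δ y z := by
    intro t₁ h₁
    apply le_csInf (dv_set_nonempty y z)
    intro t₂ h₂
    have := hglue t₁ h₁ t₂ h₂
    linarith
  have step2 : dvD S δ x z - dvD S δ y z ≤ dvD S δ x y := by
    apply le_csInf (dv_set_nonempty x y)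
    intro t₁ h₁
    have := step1 t₁ h₁
    linarith
  linarith

end FrinkAux


section TopAux
variable {G : Type*} [Group G] {S : Set G} {δ : ℕ}

lemma cyl_isOpen (f : ℕ → G) (M : ℕ) :
    @IsOpen _ (raysTop (wordDist S)) {v : GeodesicRays (wordDist S) | ∀ i ≤ M, v.1 i = f i} := by
  letI : TopologicalSpace G := ⊥
  haveI : DiscreteTopology G := ⟨rfl⟩
  show @IsOpen _ (TopologicalSpace.induced (fun c : GeodesicRays (wordDist S) => (c.1 : ℕ → G))
    (@Pi.topologicalSpace ℕ (fun _ => G) (fun _ => ⊥))) _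
  rw [isOpen_induced_iff]
  refine ⟨⋂ i ∈ Finset.Iic M, (fun g : ℕ → G => g i) ⁻¹' {f i}, ?_, ?_⟩
  · exact isOpen_biInter_finset fun i _ =>
      (continuous_apply i).isOpen_preimage _ (isOpen_discrete _)
  · ext v
    simp [Finset.mem_Iic]

lemma ball_isOpen (hS : IsFinSymmGenSet S) (hhyp : DiscHyperbolic (wordDist S) δ)
    (y : GromovBoundary (wordDist S)) (ε : ℝ) :
    @IsOpen _ (boundaryTop (wordDist S)) {x | dvD S δ y x < ε} := by
  classical
  letI tR : TopologicalSpace (GeodesicRays (wordDist S)) := raysTop (wordDist S)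
  show @IsOpen _ (tR.coinduced (Quot.mk _)) _
  refine isOpen_coinduced.mpr ?_
  set pre := (Quot.mk (fun a b : GeodesicRays (wordDist S) =>
      Asymptotic (wordDist S) a.1 b.1)) ⁻¹' {x | dvD S δ y x < ε} with hpre
  show @IsOpen _ tR pre
  have key : ∀ c : GeodesicRays (wordDist S), c ∈ pre → ∃ M : ℕ,
      ∀ v : GeodesicRays (wordDist S), (∀ i ≤ M, v.1 i = c.1 i) → v ∈ pre := by
    intro c hc
    have hdc : dvD S δ y (mkB S c) < ε := hc
    have hηpos : 0 < ε - dvD S δ y (mkB S c) := by linarith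
    obtain ⟨q₁, hq₁⟩ := exists_cpow_lt hηpos
    set r := wordDist S 1 (c.1 0) with hr
    refine ⟨max (2 * r + δ + 1) (q₁ * (2 * (7 * δ + 1)) + r + 3 * δ + (7 * δ + 1)),
      fun v hv => ?_⟩
    have hclose := close_cylinder hS hhyp c v
      (max (2 * r + δ + 1) (q₁ * (2 * (7 * δ + 1)) + r + 3 * δ + (7 * δ + 1)))
      (q₁ * (2 * (7 * δ + 1)))
      (fun i hi => (hv i hi).symm)
      (le_max_left _ _)
      (by
        have := le_max_right (2 * r + δ + 1) (q₁ * (2 * (7 * δ + 1)) + r + 3 * δ + (7 * δ + 1))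
        omega)
    have hρ := rho_le_of_close hclose
    have hdv2 : dvD S δ (mkB S c) (mkB S v) ≤ cpow q₁ := le_trans (dv_le_rho _ _) hρ
    show dvD S δ y (mkB S v) < ε
    have htri := dv_triangle (S := S) (δ := δ) y (mkB S c) (mkB S v)
    linarith
  set F : GeodesicRays (wordDist S) → ℕ :=
    fun c => if h : c ∈ pre then (key c h).choose else 0 with hF
  have hrepr : pre = ⋃ c ∈ pre, {v : GeodesicRays (wordDist S) | ∀ i ≤ F c, v.1 i = c.1 i} := by
    apply Set.Subset.antisymm
    · intro c hc
      exact Set.mem_biUnion hc (fun i _ => rfl)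
    · intro v hv
      simp only [Set.mem_iUnion] at hv
      obtain ⟨c, hc, hvc⟩ := hv
      have hFc : F c = (key c hc).choose := dif_pos hc
      exact (key c hc).choose_spec v (by rw [← hFc]; exact hvc)
  rw [hrepr]
  exact isOpen_biUnion (fun c _ => cyl_isOpen c.1 (F c))

end TopAux


/-- inverse Lebesgue lemma: for every `l > 8δ` there is a finite open
cover of `∂G` such that any two points in a common element of the cover have all their
DSG representatives `2δ`-fellow travelling up to time `l`. -/
theorem boundary_inverse_Lebesgue {G : Type*} [Group G] (S : Set G)
    (hS : IsFinSymmGenSet S) (δ : ℕ) (hhyp : DiscHyperbolic (wordDist S) δ)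
    (l : ℕ) (hl : 8 * δ < l) :
    ∃ (n : ℕ) (U : Fin n → Set (GromovBoundary (wordDist S))),
      (∀ i, @IsOpen _ (boundaryTop (wordDist S)) (U i)) ∧
      (⋃ i, U i) = Set.univ ∧
      ∀ (i : Fin n) (x x' : GromovBoundary (wordDist S)), x ∈ U i → x' ∈ U i →
        ∀ m m' : DSGs (wordDist S) S,
          Qmap (wordDist S) S m = x → Qmap (wordDist S) S m' = x' →
          ∀ j ≤ l, wordDist S (dsgRay m.1 1 j) (dsgRay m'.1 1 j) ≤ 2 * δ := by
  classical
  set d := wordDist S with hd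
  set q₀ := l + 1 with hq₀
  set ε : ℝ := cpow q₀ / 5 with hε
  set Λ := (q₀ + 3) * (2 * (7 * δ + 1)) + δ + 1 with hΛ
  have hεpos : 0 < ε := by
    have := cpow_pos q₀
    rw [hε]
    linarith
  -- choice of representatives from 1
  have hrep := fun x : GromovBoundary (wordDist S) => exists_rep_one hS hhyp x
  choose Γ hΓ0 hΓmk using hrep
  have hw : ∀ x, wordDist S 1 ((Γ x).1 Λ) = Λ := by
    intro x
    have := (Γ x).2 0 Λ
    rw [hΓ0 x] at this
    simpa [Nat.dist] using this
  set Afin := (ball_finite hS (G := G) Λ).toFinset with hAfin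
  set e := Afin.equivFin with he
  -- the balls
  set Uball : G → Set (GromovBoundary (wordDist S)) := fun g =>
    if h : ∃ x : GromovBoundary (wordDist S), (Γ x).1 Λ = g then
      {y | dvD S δ h.choose y < ε} else ∅ with hUball
  refine ⟨Afin.card, fun i => Uball ((e.symm i) : G), ?_, ?_, ?_⟩
  · -- openness
    intro i
    simp only [hUball]
    by_cases h : ∃ x : GromovBoundary (wordDist S), (Γ x).1 Λ = ((e.symm i) : G)
    · rw [dif_pos h]
      exact ball_isOpen hS hhyp _ ε
    · rw [dif_neg h]
      letI := boundaryTop (wordDist S)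
      exact isOpen_empty
  · -- covering
    apply Set.eq_univ_of_forall
    intro x
    have hmem : (Γ x).1 Λ ∈ Afin := by
      rw [hAfin, Set.Finite.mem_toFinset]
      show wordDist S 1 ((Γ x).1 Λ) ≤ Λ
      rw [hw x]
    refine Set.mem_iUnion.mpr ⟨e ⟨(Γ x).1 Λ, hmem⟩, ?_⟩
    have heq : ((e.symm (e ⟨(Γ x).1 Λ, hmem⟩)) : G) = (Γ x).1 Λ := by
      rw [Equiv.symm_apply_apply]
    simp only [heq, hUball]
    have hex : ∃ x' : GromovBoundary (wordDist S), (Γ x').1 Λ = (Γ x).1 Λ := ⟨x, rfl⟩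
    rw [dif_pos hex]
    -- show the chosen center is close to x
    set x₀ := hex.choose with hx₀def
    have hx₀ : (Γ x₀).1 Λ = (Γ x).1 Λ := hex.choose_spec
    show dvD S δ x₀ x < ε
    have hcomp := comp_lemma hS hhyp (Γ x₀).1 (Γ x).1 Λ Λ 0
      (by rw [hΓ0, hΓ0])
      (fun a b _ _ => (Γ x₀).2 a b) (fun a b _ _ => (Γ x).2 a b)
      (by rw [hx₀, wordDist_self])
    have hclose : CloseAt S δ x₀ x ((q₀ + 3) * (2 * (7 * δ + 1))) := by
      refine ⟨Γ x₀, Γ x, hΓ0 x₀, hΓ0 x, hΓmk x₀, hΓmk x, fun i hi => ?_⟩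
      exact hcomp i (by omega)
    have hρ := rho_le_of_close hclose
    have hdv := le_trans (dv_le_rho (S := S) (δ := δ) x₀ x) hρ
    have hc3 : cpow (q₀ + 3) = cpow q₀ / 8 := by
      rw [cpow, cpow, pow_add]
      norm_num
      ring
    have hcq : 0 < cpow q₀ := cpow_pos q₀
    rw [hc3] at hdv
    rw [hε]
    linarith
  · -- the fellow-travelling property
    intro i x x' hx hx' m m' hm hm'
    simp only [hUball] at hx hx'
    by_cases h : ∃ y : GromovBoundary (wordDist S), (Γ y).1 Λ = ((e.symm i) : G)
    swap
    · rw [dif_neg h] at hx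
      exact absurd hx (Set.notMem_empty x)
    rw [dif_pos h] at hx hx'
    set z₀ := h.choose with hz₀def
    have hdx : dvD S δ z₀ x < ε := hx
    have hdx' : dvD S δ z₀ x' < ε := hx'
    have hdxx' : dvD S δ x x' < 2 * ε := by
      have htri := dv_triangle (S := S) (δ := δ) x z₀ x'
      have hsym := dv_symm hS (S := S) (δ := δ) z₀ x
      linarith
    have hρxx' : rhoD S δ x x' ≤ cpow q₀ := by
      have h2dv := rho_le_two_dv hS hhyp x x'
      have hcq : 0 < cpow q₀ := cpow_pos q₀
      rw [hε] at hdxx'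
      linarith
    have hclose : CloseAt S δ x x' (q₀ * (2 * (7 * δ + 1))) :=
      close_of_rho_le hS hhyp hρxx'
    have hmono : l + (7 * δ + 1) ≤ q₀ * (2 * (7 * δ + 1)) := by
      rw [hq₀]
      have h1 : (l + 1) * (2 * (7 * δ + 1)) = l * (2 * (7 * δ + 1)) + 2 * (7 * δ + 1) := by
        ring
      have h2 : l ≤ l * (2 * (7 * δ + 1)) := Nat.le_mul_of_pos_right l (by omega)
      omega
    exact close_mates hS hhyp (close_mono hclose hmono) m m' hm hm'
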